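/- arXiv:2404.08495 — 5 statements merged into one kernel-verified Lean document; each statement's English description precedes it below -/
import Mathlib

section
/- Let S and A be finite sets, let d* and d be probability distributions on S, and let π*, π', π_SFT map each s ∈ S to a probability distribution on A, with d(s)·π_SFT(a|s) > 0 whenever d*(s)·π*(a|s) > 0. Let C = max_{s,a} (d*(s)·π*(a|s)) / (d(s)·π_SFT(a|s)). Then for every g : S×A → ℝ and for π̄ ∈ {π*, π'}: |E_{s∼d*, a∼π̄(s)}[g(s,a)]| ≤ √(2C) · √(E_{s∼d}[Σ_a (½π_SFT(a|s) + ½π'(a|s))·g(s,a)²]). In particular, the relaxed Q-evaluation concentrability coefficient C_eval(F) is at most √(2·max_{h,s,a} d^{π*}_h(s,a)/d^{π_SFT}_h(s,a)). -/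
open Finset

/-- The probability simplex over a finite set. -/
def probSimplex (A : Type*) [Fintype A] : Set (A → ℝ) :=
  {p | (∀ a, 0 ≤ p a) ∧ ∑ a, p a = 1}

/-- **Q-evaluation change of measure bound.**  Let `S`, `A` be finite sets, `d*`, `d`
probability distributions on `S`, and `π*, π', π_SFT` policies (rows are distributions over `A`),
with `d(s)·π_SFT(a|s) > 0` whenever `d*(s)·π*(a|s) > 0`.  If `C` bounds (in particular, is the
maximum of) the ratios `(d*(s)·π*(a|s))/(d(s)·π_SFT(a|s))`, then for every `g : S × A → ℝ` and
for `π̄ ∈ {π*, π'}`,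
`|E_{s∼d*, a∼π̄(s)}[g(s,a)]| ≤ √(2C) · √(E_{s∼d}[Σ_a (½π_SFT(a|s)+½π'(a|s))·g(s,a)²])`.
(This is the inequality implying `C_eval(F) ≤ √(2·max_{h,s,a} d^{π*}_h(s,a)/d^{π_SFT}_h(s,a))`.) -/
theorem eval_change_of_measure {S A : Type*} [Fintype S] [Fintype A]
    (dstar d : S → ℝ)
    (hdstar : dstar ∈ probSimplex S) (hd : d ∈ probSimplex S)
    (pistar pi' piSFT : S → A → ℝ)
    (hpistar : ∀ s, pistar s ∈ probSimplex A)
    (hpi' : ∀ s, pi' s ∈ probSimplex A)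
    (hpiSFT : ∀ s, piSFT s ∈ probSimplex A)
    (hpos : ∀ s a, 0 < dstar s * pistar s a → 0 < d s * piSFT s a)
    (C : ℝ) (hC : ∀ s a, 0 < dstar s * pistar s a →
      dstar s * pistar s a / (d s * piSFT s a) ≤ C)
    (g : S → A → ℝ) :
    ∀ pib, (pib = pistar ∨ pib = pi') →
      |∑ s, ∑ a, dstar s * pib s a * g s a|
        ≤ Real.sqrt (2 * C) *
            Real.sqrt (∑ s, d s * ∑ a, (piSFT s a / 2 + pi' s a / 2) * g s a ^ 2) := by
  intro pib hpib
  obtain ⟨hdstar0, hdstar1⟩ := hdstar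
  obtain ⟨hd0, hd1⟩ := hd
  have hpib_simplex : ∀ s, pib s ∈ probSimplex A := by
    rcases hpib with h | h <;> subst h <;> assumption
  set p : S → A → ℝ := fun s a => dstar s * pib s a with hp
  have hp0 : ∀ s a, 0 ≤ p s a := fun s a =>
    mul_nonneg (hdstar0 s) ((hpib_simplex s).1 a)
  have hpsum : ∑ s, ∑ a, p s a = 1 := by
    have h1 : ∀ s, ∑ a, p s a = dstar s := by
      intro s
      simp only [hp, ← Finset.mul_sum, (hpib_simplex s).2, mul_one]
    simp_rw [h1]; exact hdstar1
  obtain ⟨s0, hs0⟩ : ∃ s, 0 < dstar s := by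
    by_contra h; push_neg at h
    have : (∑ s, dstar s) ≤ 0 := Finset.sum_nonpos fun s _ => h s
    linarith
  obtain ⟨a0, ha0⟩ : ∃ a, 0 < pistar s0 a := by
    by_contra h; push_neg at h
    have : (∑ a, pistar s0 a) ≤ 0 := Finset.sum_nonpos fun a _ => h a
    have h2 := (hpistar s0).2; linarith
  have hCpos : 0 < C := by
    have hpos0 : 0 < dstar s0 * pistar s0 a0 := mul_pos hs0 ha0
    exact lt_of_lt_of_le (div_pos hpos0 (hpos s0 a0 hpos0)) (hC s0 a0 hpos0)
  have hkey0 : ∀ s a, dstar s * pistar s a ≤ C * (d s * piSFT s a) := by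
    intro s a
    rcases lt_or_ge 0 (dstar s * pistar s a) with h | h
    · have hq := hpos s a h
      have h2 := hC s a h
      calc dstar s * pistar s a
          = dstar s * pistar s a / (d s * piSFT s a) * (d s * piSFT s a) := by
            rw [div_mul_cancel₀ _ hq.ne']
        _ ≤ C * (d s * piSFT s a) := mul_le_mul_of_nonneg_right h2 hq.le
    · exact h.trans (mul_nonneg hCpos.le (mul_nonneg (hd0 s) ((hpiSFT s).1 a)))
  have hds : ∀ s, dstar s ≤ C * d s := by
    intro s
    have h1 := Finset.sum_le_sum (fun a (_ : a ∈ Finset.univ) => hkey0 s a)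
    simpa [← Finset.mul_sum, (hpistar s).2, (hpiSFT s).2] using h1
  have hkey : ∀ s a, p s a ≤ 2 * C * (d s * (piSFT s a / 2 + pi' s a / 2)) := by
    intro s a
    rcases hpib with h | h <;> subst h
    · have h1 := hkey0 s a
      have h2 : 0 ≤ d s * pi' s a := mul_nonneg (hd0 s) ((hpi' s).1 a)
      simp only [hp]
      nlinarith
    · have h1 : p s a ≤ (C * d s) * pib s a :=
        mul_le_mul_of_nonneg_right (hds s) ((hpib_simplex s).1 a)
      have h2 : 0 ≤ d s * piSFT s a := mul_nonneg (hd0 s) ((hpiSFT s).1 a)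
      nlinarith
  -- Cauchy--Schwarz
  set T : ℝ := ∑ s, ∑ a, dstar s * pib s a * g s a with hT
  have hswap : T = ∑ x ∈ Finset.univ ×ˢ Finset.univ, p x.1 x.2 * g x.1 x.2 := by
    rw [Finset.sum_product]
  have hcs : T ^ 2 ≤ ∑ x ∈ Finset.univ ×ˢ Finset.univ, p x.1 x.2 * g x.1 x.2 ^ 2 := by
    have h1 := Finset.sum_mul_sq_le_sq_mul_sq (Finset.univ ×ˢ Finset.univ)
      (fun x : S × A => Real.sqrt (p x.1 x.2))
      (fun x : S × A => Real.sqrt (p x.1 x.2) * g x.1 x.2)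
    have e1 : ∀ x : S × A, Real.sqrt (p x.1 x.2) * (Real.sqrt (p x.1 x.2) * g x.1 x.2)
        = p x.1 x.2 * g x.1 x.2 := by
      intro x
      rw [← mul_assoc, Real.mul_self_sqrt (hp0 x.1 x.2)]
    have e2 : ∀ x : S × A, Real.sqrt (p x.1 x.2) ^ 2 = p x.1 x.2 := fun x =>
      Real.sq_sqrt (hp0 x.1 x.2)
    have e3 : ∀ x : S × A, (Real.sqrt (p x.1 x.2) * g x.1 x.2) ^ 2
        = p x.1 x.2 * g x.1 x.2 ^ 2 := by
      intro x; rw [mul_pow, e2]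
    simp only [e1, e2, e3] at h1
    calc T ^ 2 = (∑ x ∈ Finset.univ ×ˢ Finset.univ, p x.1 x.2 * g x.1 x.2) ^ 2 := by
          rw [hswap]
      _ ≤ (∑ x ∈ Finset.univ ×ˢ Finset.univ, p x.1 x.2)
            * ∑ x ∈ Finset.univ ×ˢ Finset.univ, p x.1 x.2 * g x.1 x.2 ^ 2 := h1
      _ = ∑ x ∈ Finset.univ ×ˢ Finset.univ, p x.1 x.2 * g x.1 x.2 ^ 2 := by
          rw [show (∑ x ∈ Finset.univ ×ˢ Finset.univ, p x.1 x.2) = 1 by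
            rw [Finset.sum_product]; exact hpsum, one_mul]
  set R : ℝ := ∑ s, d s * ∑ a, (piSFT s a / 2 + pi' s a / 2) * g s a ^ 2 with hR
  have hbound : (∑ x ∈ Finset.univ ×ˢ Finset.univ, p x.1 x.2 * g x.1 x.2 ^ 2) ≤ 2 * C * R := by
    have h1 : ∀ x ∈ Finset.univ ×ˢ Finset.univ, p x.1 x.2 * g x.1 x.2 ^ 2
        ≤ 2 * C * (d x.1 * ((piSFT x.1 x.2 / 2 + pi' x.1 x.2 / 2) * g x.1 x.2 ^ 2)) := by
      intro x _
      have := mul_le_mul_of_nonneg_right (hkey x.1 x.2) (sq_nonneg (g x.1 x.2))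
      nlinarith [this]
    calc (∑ x ∈ Finset.univ ×ˢ Finset.univ, p x.1 x.2 * g x.1 x.2 ^ 2)
        ≤ ∑ x ∈ Finset.univ ×ˢ Finset.univ,
            2 * C * (d x.1 * ((piSFT x.1 x.2 / 2 + pi' x.1 x.2 / 2) * g x.1 x.2 ^ 2)) :=
          Finset.sum_le_sum h1
      _ = 2 * C * R := by
          rw [← Finset.mul_sum, Finset.sum_product, hR]
          congr 1
          refine Finset.sum_congr rfl fun s _ => ?_
          rw [Finset.mul_sum]
  have habs : |T| = Real.sqrt (T ^ 2) := (Real.sqrt_sq_eq_abs T).symm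
  rw [show |∑ s, ∑ a, dstar s * pib s a * g s a| = |T| from rfl, habs,
    ← Real.sqrt_mul (by linarith : (0:ℝ) ≤ 2 * C)]
  exact Real.sqrt_le_sqrt (hcs.trans hbound)
end

section
/- Let A be a finite set, q a strictly positive probability distribution on A, and λ, η > 0. Define a sequence of distributions by p¹ = q and, for t ≥ 1, p^{t+1} = argmin_{p∈Δ(A)} ⟨−Q^t, p⟩ + λ·KL(p‖q) + (1/η)·KL(p‖p^t), where each Q^t : A → ℝ satisfies 0 ≤ Q^t(a) ≤ r_max for all a. Then for every t ≥ 1, KL(p^t‖q) ≤ r_max·(t−1)/λ. -/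
open Finset

/-- KL divergence between two distributions on a finite set. -/
noncomputable def KLdiv {A : Type*} [Fintype A] (p q : A → ℝ) : ℝ :=
  ∑ a, p a * Real.log (p a / q a)

/-- The regularized mirror-descent objective
`p ↦ ⟨−Q, p⟩ + λ·KL(p‖q) + (1/η)·KL(p‖pₜ)`. -/
noncomputable def mdObj {A : Type*} [Fintype A]
    (Q : A → ℝ) (q pt : A → ℝ) (lam eta : ℝ) (p : A → ℝ) : ℝ :=
  (∑ a, -Q a * p a) + lam * KLdiv p q + (1 / eta) * KLdiv p pt

lemma KLdiv_nonneg {A : Type*} [Fintype A] {p r : A → ℝ}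
    (hp : p ∈ probSimplex A) (hr : r ∈ probSimplex A) (hrpos : ∀ a, 0 < r a) :
    0 ≤ KLdiv p r := by
  have key : ∀ a : A, p a - r a ≤ p a * Real.log (p a / r a) := by
    intro a
    rcases eq_or_lt_of_le (hp.1 a) with h0 | hpa
    · simp [← h0, (hrpos a).le]
    · have hdiv : 0 < r a / p a := div_pos (hrpos a) hpa
      have hlog : Real.log (r a / p a) ≤ r a / p a - 1 := Real.log_le_sub_one_of_pos hdiv
      have heq : Real.log (p a / r a) = - Real.log (r a / p a) := by
        rw [← Real.log_inv, inv_div]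
      have : 1 - r a / p a ≤ Real.log (p a / r a) := by rw [heq]; linarith
      calc p a - r a = p a * (1 - r a / p a) := by field_simp
        _ ≤ p a * Real.log (p a / r a) := mul_le_mul_of_nonneg_left this hpa.le
  have h1 : ∑ a : A, (p a - r a) = 0 := by
    rw [Finset.sum_sub_distrib, hp.2, hr.2]; ring
  calc (0:ℝ) = ∑ a : A, (p a - r a) := h1.symm
    _ ≤ ∑ a : A, p a * Real.log (p a / r a) := Finset.sum_le_sum (fun a _ => key a)
    _ = KLdiv p r := rfl

lemma KLdiv_self {A : Type*} [Fintype A] (p : A → ℝ) :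
    KLdiv p p = 0 := by
  have h : ∀ a : A, p a * Real.log (p a / p a) = 0 := by
    intro a
    rcases eq_or_ne (p a) 0 with h | h
    · simp [h]
    · simp [div_self h]
  simp [KLdiv, h]

lemma mdObj_eq_sum {A : Type*} [Fintype A]
    (Q q pt : A → ℝ) (lam eta : ℝ) (p : A → ℝ) :
    mdObj Q q pt lam eta p
      = ∑ a, (-Q a * p a + lam * (p a * Real.log (p a / q a))
              + (1/eta) * (p a * Real.log (p a / pt a))) := by
  rw [mdObj, KLdiv, KLdiv, Finset.mul_sum, Finset.mul_sum,
    ← Finset.sum_add_distrib, ← Finset.sum_add_distrib]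

lemma minimizer_pos {A : Type*} [Fintype A]
    (Q q pt : A → ℝ) (lam eta : ℝ) (hlam : 0 < lam) (heta : 0 < eta)
    (hqpos : ∀ a, 0 < q a) (hptpos : ∀ a, 0 < pt a)
    (p : A → ℝ) (hp : p ∈ probSimplex A)
    (hmin : ∀ p' ∈ probSimplex A, mdObj Q q pt lam eta p ≤ mdObj Q q pt lam eta p') :
    ∀ a, 0 < p a := by
  classical
  by_contra hcon
  push_neg at hcon
  obtain ⟨a0, ha0⟩ := hcon
  have hpa0 : p a0 = 0 := le_antisymm ha0 (hp.1 a0)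
  -- some coordinate is positive
  have hb : ∃ b, 0 < p b := by
    by_contra hb
    push_neg at hb
    have : (∑ a, p a) ≤ 0 := Finset.sum_nonpos (fun a _ => hb a)
    rw [hp.2] at this; linarith
  obtain ⟨b, hpb⟩ := hb
  have hne : a0 ≠ b := by
    intro h; rw [h] at hpa0; rw [hpa0] at hpb; exact lt_irrefl 0 hpb
  set pb := p b with hpbdef
  -- constants
  set c : ℝ := lam + 1/eta with hc
  have hcpos : 0 < c := by positivity
  set K : A → ℝ := fun a => -Q a - lam * Real.log (q a) - (1/eta) * Real.log (pt a) with hK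
  set G : A → ℝ → ℝ := fun a x => -Q a * x + lam * (x * Real.log (x / q a))
      + (1/eta) * (x * Real.log (x / pt a)) with hG
  have hGexp : ∀ a : A, ∀ x : ℝ, 0 < x → G a x = x * K a + c * (x * Real.log x) := by
    intro a x hx
    simp only [hG, hK, hc]
    rw [Real.log_div hx.ne' (hqpos a).ne', Real.log_div hx.ne' (hptpos a).ne']
    ring
  have hG0 : ∀ a : A, G a 0 = 0 := by intro a; simp [hG]
  set C : ℝ := K a0 - K b + c * |Real.log pb| with hC
  set ε : ℝ := min (pb/2) (Real.exp (-(C+1)/c)) with hε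
  have hεpos : 0 < ε := lt_min (by linarith) (Real.exp_pos _)
  have hεle : ε ≤ pb/2 := min_le_left _ _
  -- the perturbed point
  set p' : A → ℝ := fun a => p a + (if a = a0 then ε else 0) - (if a = b then ε else 0)
    with hp'
  have hp'a0 : p' a0 = ε := by
    simp [hp', hpa0, hne]
  have hp'b : p' b = pb - ε := by
    simp [hp', Ne.symm hne, ← hpbdef]
  have hp'other : ∀ a, a ≠ a0 → a ≠ b → p' a = p a := by
    intro a h1 h2; simp [hp', if_neg h1, if_neg h2]
  have hp'mem : p' ∈ probSimplex A := by
    constructor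
    · intro a
      rcases eq_or_ne a a0 with rfl | h1
      · rw [hp'a0]; exact hεpos.le
      · rcases eq_or_ne a b with rfl | h2
        · rw [hp'b]; linarith
        · rw [hp'other a h1 h2]; exact hp.1 a
    · simp only [hp', Finset.sum_sub_distrib, Finset.sum_add_distrib,
        Finset.sum_ite_eq' Finset.univ, Finset.mem_univ, if_true, hp.2]
      ring
  -- difference of objectives localizes to the two changed coordinates
  have hdiff : mdObj Q q pt lam eta p' - mdObj Q q pt lam eta p
      = (G a0 (p' a0) - G a0 (p a0)) + (G b (p' b) - G b (p b)) := by
    rw [mdObj_eq_sum, mdObj_eq_sum, ← Finset.sum_sub_distrib]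
    show (∑ a, (G a (p' a) - G a (p a))) = _
    have hvanish : ∀ a ∈ Finset.univ \ ({a0, b} : Finset A),
        G a (p' a) - G a (p a) = 0 := by
      intro a ha
      simp only [Finset.mem_sdiff, Finset.mem_insert, Finset.mem_singleton] at ha
      push_neg at ha
      rw [hp'other a ha.2.1 ha.2.2]; ring
    rw [← Finset.sum_subset (Finset.subset_univ ({a0, b} : Finset A))
      (by intro x _ hx; exact hvanish x (Finset.mem_sdiff.mpr ⟨Finset.mem_univ x, hx⟩))]
    rw [Finset.sum_pair hne]
  -- bound the difference
  have hpbε : 0 < pb - ε := by linarith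
  have hterm1 : G a0 (p' a0) - G a0 (p a0) = ε * K a0 + c * (ε * Real.log ε) := by
    rw [hp'a0, hpa0, hG0, hGexp a0 ε hεpos]; ring
  have hterm2 : G b (p' b) - G b (p b) ≤ -ε * K b + c * (ε * |Real.log pb|) := by
    rw [hp'b, hGexp b _ hpbε, hGexp b pb hpb]
    have hmono : Real.log (pb - ε) ≤ Real.log pb := by
      apply Real.log_le_log hpbε; linarith
    have h1 : (pb - ε) * (Real.log (pb - ε) - Real.log pb) ≤ 0 :=
      mul_nonpos_of_nonneg_of_nonpos hpbε.le (by linarith)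
    have h2 : -Real.log pb ≤ |Real.log pb| := neg_le_abs _
    have hmul : ε * (-Real.log pb) ≤ ε * |Real.log pb| :=
      mul_le_mul_of_nonneg_left h2 hεpos.le
    have h3 : (pb - ε) * Real.log (pb - ε) - pb * Real.log pb ≤ ε * |Real.log pb| := by
      nlinarith [h1, hmul]
    have h4 : c * ((pb - ε) * Real.log (pb - ε) - pb * Real.log pb) ≤ c * (ε * |Real.log pb|) :=
      mul_le_mul_of_nonneg_left h3 hcpos.le
    have e : (pb - ε) * K b + c * ((pb - ε) * Real.log (pb - ε))
        - (pb * K b + c * (pb * Real.log pb))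
        = -ε * K b + c * ((pb - ε) * Real.log (pb - ε) - pb * Real.log pb) := by ring
    rw [e]
    linarith [h4]
  have hfinal : mdObj Q q pt lam eta p' - mdObj Q q pt lam eta p
      ≤ ε * (C + c * Real.log ε) := by
    rw [hdiff, hterm1]
    have := hterm2
    simp only [hC]; nlinarith
  have hlogε : c * Real.log ε ≤ -(C+1) := by
    have h1 : Real.log ε ≤ -(C+1)/c := by
      have := Real.log_le_log hεpos (min_le_right (pb/2) (Real.exp (-(C+1)/c)))
      rwa [Real.log_exp] at this
    calc c * Real.log ε ≤ c * (-(C+1)/c) := mul_le_mul_of_nonneg_left h1 hcpos.le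
      _ = -(C+1) := by field_simp
  have hneg : mdObj Q q pt lam eta p' - mdObj Q q pt lam eta p < 0 := by
    have : ε * (C + c * Real.log ε) ≤ ε * (-1) := by
      apply mul_le_mul_of_nonneg_left _ hεpos.le
      linarith
    linarith [hfinal, this, hεpos]
  have := hmin p' hp'mem
  linarith

/-- **KL boundedness of the NPG iterates.**  Let `q` be a strictly positive distribution on a
finite set `A` and `λ, η > 0`.  Define `p¹ = q` and, for `t ≥ 1`, let `p^{t+1}` be a minimizer
over the simplex of `p ↦ ⟨−Qᵗ, p⟩ + λ·KL(p‖q) + (1/η)·KL(p‖pᵗ)`, where `0 ≤ Qᵗ(a) ≤ r_max`.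
Then for every `t ≥ 1`, `KL(pᵗ‖q) ≤ r_max·(t−1)/λ`. -/
theorem npg_kl_bound {A : Type*} [Fintype A]
    (q : A → ℝ) (hq : q ∈ probSimplex A) (hqpos : ∀ a, 0 < q a)
    (lam eta rmax : ℝ) (hlam : 0 < lam) (heta : 0 < eta)
    (Q : ℕ → A → ℝ) (hQ : ∀ t a, Q t a ∈ Set.Icc (0 : ℝ) rmax)
    (p : ℕ → A → ℝ) (hp1 : p 1 = q)
    (hupd : ∀ t, 1 ≤ t →
      p (t + 1) ∈ probSimplex A ∧
      ∀ p' ∈ probSimplex A,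
        mdObj (Q t) q (p t) lam eta (p (t + 1)) ≤ mdObj (Q t) q (p t) lam eta p') :
    ∀ t, 1 ≤ t → KLdiv (p t) q ≤ rmax * ((t : ℝ) - 1) / lam := by
  -- the iterates stay in the simplex and are strictly positive
  have hpos : ∀ t, 1 ≤ t → p t ∈ probSimplex A ∧ ∀ a, 0 < p t a := by
    intro t ht
    induction t, ht using Nat.le_induction with
    | base => rw [hp1]; exact ⟨hq, hqpos⟩
    | succ n hn ih =>
      obtain ⟨hmem, hmin⟩ := hupd n hn
      exact ⟨hmem, minimizer_pos (Q n) q (p n) lam eta hlam heta hqpos ih.2 _ hmem hmin⟩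
  intro t ht
  induction t, ht using Nat.le_induction with
  | base =>
    rw [hp1, KLdiv_self]
    norm_num
  | succ t hn ih =>
    obtain ⟨hmem, hmin⟩ := hupd t hn
    have hptmem := (hpos t hn).1
    have hptpos := (hpos t hn).2
    have hcomp := hmin (p t) hptmem
    rw [mdObj, mdObj, KLdiv_self] at hcomp
    have hKL2 : (0:ℝ) ≤ (1/eta) * KLdiv (p (t+1)) (p t) :=
      mul_nonneg (by positivity) (KLdiv_nonneg hmem hptmem hptpos)
    -- linear terms bounds
    have hlin1 : -rmax ≤ ∑ a, -Q t a * p (t+1) a := by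
      have h : ∀ a ∈ Finset.univ, -rmax * p (t+1) a ≤ -Q t a * p (t+1) a := by
        intro a _
        exact mul_le_mul_of_nonneg_right (by linarith [(hQ t a).2]) (hmem.1 a)
      calc -rmax = ∑ a, -rmax * p (t+1) a := by
            rw [← Finset.mul_sum, hmem.2]; ring
        _ ≤ ∑ a, -Q t a * p (t+1) a := Finset.sum_le_sum h
    have hlin2 : (∑ a, -Q t a * p t a) ≤ 0 := by
      apply Finset.sum_nonpos
      intro a _
      exact mul_nonpos_of_nonpos_of_nonneg (by linarith [(hQ t a).1]) (hptmem.1 a)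
    -- combine
    have hih : lam * KLdiv (p t) q ≤ rmax * ((t:ℝ) - 1) := by
      have := mul_le_mul_of_nonneg_left ih hlam.le
      calc lam * KLdiv (p t) q ≤ lam * (rmax * ((t:ℝ) - 1) / lam) := this
        _ = rmax * ((t:ℝ) - 1) := by field_simp
    have hkey : lam * KLdiv (p (t+1)) q ≤ rmax * (t:ℝ) := by linarith
    rw [le_div_iff₀ hlam]
    push_cast
    linarith [hkey]
end

section
/- (MLE reward estimation guarantee.) Under the reward realizability assumption, with probability at least 1−δ over the M i.i.d. labeled preference pairs, the maximum-likelihood estimate r̂ satisfies E_{τ^0,τ^1 i.i.d. ∼ d^{π_SFT}}[|r*(τ^0) − r*(τ^1) − r̂(τ^0) + r̂(τ^1)|²] ≤ c₁·κ²·log(|R|/δ)/M for a universal constant c₁ > 0. -/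
open Finset

noncomputable def obsProb {T : Type*} (Φ : ℝ → ℝ) (r : T → ℝ) (x : T × T × Bool) : ℝ :=
  if x.2.2 then Φ (r x.2.1 - r x.1) else 1 - Φ (r x.2.1 - r x.1)

lemma bern_hellinger {p q : ℝ} (hp : p ∈ Set.Icc (0:ℝ) 1) (hq : q ∈ Set.Icc (0:ℝ) 1) :
    (p - q)^2 ≤ 8 * (1 - (Real.sqrt (p*q) + Real.sqrt ((1-p)*(1-q)))) := by
  obtain ⟨hp0, hp1⟩ := hp; obtain ⟨hq0, hq1⟩ := hq
  set a := Real.sqrt p with ha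
  set b := Real.sqrt q with hb
  set c := Real.sqrt (1-p) with hc
  set d := Real.sqrt (1-q) with hd
  have ha2 : a^2 = p := Real.sq_sqrt hp0
  have hb2 : b^2 = q := Real.sq_sqrt hq0
  have hc2 : c^2 = 1-p := Real.sq_sqrt (by linarith)
  have hd2 : d^2 = 1-q := Real.sq_sqrt (by linarith)
  have hab : Real.sqrt (p*q) = a*b := Real.sqrt_mul hp0 q
  have hcd : Real.sqrt ((1-p)*(1-q)) = c*d := Real.sqrt_mul (by linarith) _
  rw [hab, hcd]
  have h4 : (a+b)^2 ≤ 4 := by nlinarith [Real.sqrt_nonneg p, Real.sqrt_nonneg q]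
  nlinarith [sq_nonneg (a-b), sq_nonneg (c-d), mul_nonneg (sq_nonneg (a-b)) (sub_nonneg.2 h4),
    mul_nonneg (mul_nonneg (Real.sqrt_nonneg p) (Real.sqrt_nonneg q)) (sq_nonneg (c-d))]

lemma mvt_lip {Φ : ℝ → ℝ} {rmax κ : ℝ} (hκ : 0 < κ) (hdiff : Differentiable ℝ Φ)
    (hderiv : ∀ x ∈ Set.Icc (-rmax) rmax, κ⁻¹ ≤ deriv Φ x)
    {a b : ℝ} (ha : a ∈ Set.Icc (-rmax) rmax) (hb : b ∈ Set.Icc (-rmax) rmax) :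
    |a - b| ≤ κ * |Φ a - Φ b| := by
  wlog hab : a ≤ b generalizing a b
  · rw [abs_sub_comm, abs_sub_comm (Φ a)]; exact this hb ha (le_of_not_ge hab)
  rcases eq_or_lt_of_le hab with rfl | hlt
  · simp
  obtain ⟨c, hc, hcd⟩ := exists_deriv_eq_slope Φ hlt (hdiff.continuous.continuousOn)
    (hdiff.differentiableOn)
  have hcmem : c ∈ Set.Icc (-rmax) rmax :=
    ⟨le_trans ha.1 hc.1.le, le_trans hc.2.le hb.2⟩
  have h1 : κ⁻¹ ≤ (Φ b - Φ a) / (b - a) := hcd ▸ hderiv c hcmem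
  have h2 : (b - a) * κ⁻¹ ≤ Φ b - Φ a := by
    rw [mul_comm]; exact (le_div_iff₀ (by linarith)).1 h1
  have h3 : 0 ≤ Φ b - Φ a :=
    le_trans (mul_nonneg (by linarith) (by positivity)) h2
  rw [abs_sub_comm, abs_sub_comm (Φ a), abs_of_nonneg (by linarith), abs_of_nonneg h3]
  rw [← sub_nonneg]
  have := mul_le_mul_of_nonneg_left h2 hκ.le
  rw [mul_comm (b-a), ← mul_assoc, mul_inv_cancel₀ hκ.ne', one_mul] at this
  linarith

lemma markov_fin {Ω : Type*} [Fintype Ω] (w X : Ω → ℝ) (hw : ∀ i, 0 ≤ w i)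
    (hX : ∀ i, 0 ≤ X i) {a : ℝ} (ha : 0 < a) [DecidablePred fun i => a ≤ X i] :
    ∑ i ∈ univ.filter (fun i => a ≤ X i), w i ≤ (∑ i, w i * X i) / a := by
  rw [le_div_iff₀ ha]
  calc (∑ i ∈ univ.filter (fun i => a ≤ X i), w i) * a
      = ∑ i ∈ univ.filter (fun i => a ≤ X i), w i * a := by rw [Finset.sum_mul]
    _ ≤ ∑ i ∈ univ.filter (fun i => a ≤ X i), w i * X i := by
        refine Finset.sum_le_sum fun i hi => ?_
        exact mul_le_mul_of_nonneg_left (mem_filter.1 hi).2 (hw i)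
    _ ≤ ∑ i, w i * X i := Finset.sum_le_sum_of_subset_of_nonneg (filter_subset _ _)
        fun i _ _ => mul_nonneg (hw i) (hX i)

/-- **MLE reward estimation guarantee.**  There is a universal constant `c₁ > 0` such that,
under the reward realizability assumption (`r* ∈ R`, all returns in `[0, r_max]`), for any link
function `Φ` (monotonically increasing, differentiable, values in `(0,1)`) with
`Φ'(x) ≥ 1/κ` on `[−r_max, r_max]`, with probability at least `1 − δ` over the `M` i.i.d.
labeled preference pairs, the maximum-likelihood estimate `r̂` satisfies
`E_{τ⁰,τ¹∼d_SFT}[|r*(τ⁰) − r*(τ¹) − r̂(τ⁰) + r̂(τ¹)|²] ≤ c₁·κ²·log(|R|/δ)/M`. -/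
theorem mle_reward_estimation :
    ∃ c₁ : ℝ, 0 < c₁ ∧
      ∀ (T : Type) (_ : Fintype T) (dSFT : T → ℝ),
        (∀ τ, 0 ≤ dSFT τ) → (∑ τ, dSFT τ = 1) →
        ∀ (rmax κ : ℝ), 0 ≤ rmax → 0 < κ →
        ∀ (Φ : ℝ → ℝ), StrictMono Φ → Differentiable ℝ Φ →
          (∀ x, Φ x ∈ Set.Ioo (0 : ℝ) 1) →
          (∀ x ∈ Set.Icc (-rmax) rmax, κ⁻¹ ≤ deriv Φ x) →
        ∀ (Rcls : Finset (T → ℝ)) (rstar : T → ℝ), rstar ∈ Rcls →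
          (∀ r ∈ Rcls, ∀ τ, r τ ∈ Set.Icc (0 : ℝ) rmax) →
        ∀ (M : ℕ), 0 < M →
        ∀ (δ : ℝ), δ ∈ Set.Ioc (0 : ℝ) 1 →
        ∀ (rhat : (Fin M → T × T × Bool) → T → ℝ),
          (∀ data, rhat data ∈ Rcls ∧
            ∀ r ∈ Rcls,
              (∑ m, -Real.log (obsProb Φ (rhat data) (data m)))
                ≤ ∑ m, -Real.log (obsProb Φ r (data m))) →
        (1 : ℝ) - δ ≤
          ∑ data ∈ Finset.univ.filter
            (fun data : Fin M → T × T × Bool =>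
              ∑ τ0, ∑ τ1, dSFT τ0 * dSFT τ1 *
                  |rstar τ0 - rstar τ1 - rhat data τ0 + rhat data τ1| ^ 2
                ≤ c₁ * κ ^ 2 * Real.log (Rcls.card / δ) / M),
            ∏ m, dSFT (data m).1 * dSFT (data m).2.1 * obsProb Φ rstar (data m) := by
  classical
  refine ⟨8, by norm_num, ?_⟩
  intro T _ d hd0 hd1 rmax κ hrmax hκ Φ hmono hdiff hΦ01 hderiv Rcls rstar hstar hbnd
    M hM δ hδ rhat hrhat
  have hq : ∀ (r : T → ℝ) (x : T × T × Bool), obsProb Φ r x ∈ Set.Ioo (0:ℝ) 1 := by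
    intro r x
    obtain ⟨τ0, τ1, b⟩ := x
    have h := hΦ01 (r τ1 - r τ0)
    cases b
    · simp only [obsProb, Set.mem_Ioo]
      norm_num
      constructor
      · linarith [h.2]
      · linarith [h.1]
    · simpa [obsProb] using h
  set w : T × T × Bool → ℝ := fun x => d x.1 * d x.2.1 * obsProb Φ rstar x with hw_def
  set P : (Fin M → T × T × Bool) → ℝ := fun data => ∏ m, w (data m) with hP_def
  have hw0 : ∀ x, 0 ≤ w x := fun x =>
    mul_nonneg (mul_nonneg (hd0 _) (hd0 _)) (hq rstar x).1.le
  have hP0 : ∀ data, 0 ≤ P data := fun data => Finset.prod_nonneg fun m _ => hw0 _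
  have hwsum : ∑ x : T × T × Bool, w x = 1 := by
    rw [Fintype.sum_prod_type]
    have h1 : ∀ τ0 : T, ∑ y : T × Bool, w (τ0, y) = d τ0 := by
      intro τ0
      rw [Fintype.sum_prod_type]
      have h2 : ∀ τ1 : T, ∑ b : Bool, w (τ0, τ1, b) = d τ0 * d τ1 := by
        intro τ1
        rw [Fintype.sum_bool]
        simp [hw_def, obsProb]
        ring
      rw [Finset.sum_congr rfl fun τ1 _ => h2 τ1, ← Finset.mul_sum, hd1, mul_one]
    rw [Finset.sum_congr rfl fun τ0 _ => h1 τ0, hd1]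
  have hPsum : ∑ data : Fin M → T × T × Bool, P data = 1 := by
    have h := Finset.prod_univ_sum (fun _ : Fin M => (univ : Finset (T × T × Bool)))
      (fun _ x => w x)
    rw [Fintype.piFinset_univ] at h
    simp only [hP_def, ← h, hwsum, Finset.prod_const_one]
  set X : (T → ℝ) → (Fin M → T × T × Bool) → ℝ := fun r data =>
    ∏ m, Real.sqrt (obsProb Φ r (data m) / obsProb Φ rstar (data m)) with hX_def
  have hX0 : ∀ r data, 0 ≤ X r data := fun r data =>
    Finset.prod_nonneg fun m _ => Real.sqrt_nonneg _
  set G : (T → ℝ) → T × T × Bool → ℝ := fun r x =>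
    d x.1 * d x.2.1 * Real.sqrt (obsProb Φ r x * obsProb Φ rstar x) with hG_def
  set g : (T → ℝ) → ℝ := fun r => ∑ x : T × T × Bool, G r x with hg_def
  have hG0 : ∀ r x, 0 ≤ G r x := fun r x =>
    mul_nonneg (mul_nonneg (hd0 _) (hd0 _)) (Real.sqrt_nonneg _)
  have hwX : ∀ (r : T → ℝ) (x : T × T × Bool),
      w x * Real.sqrt (obsProb Φ r x / obsProb Φ rstar x) = G r x := by
    intro r x
    have h1 : (0:ℝ) < obsProb Φ rstar x := (hq rstar x).1
    have h2 : (0:ℝ) ≤ obsProb Φ r x := (hq r x).1.le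
    have hsne : Real.sqrt (obsProb Φ rstar x) ≠ 0 := ne_of_gt (Real.sqrt_pos.2 h1)
    have hss : Real.sqrt (obsProb Φ rstar x) * Real.sqrt (obsProb Φ rstar x)
        = obsProb Φ rstar x := Real.mul_self_sqrt h1.le
    have key : Real.sqrt (obsProb Φ r x) / Real.sqrt (obsProb Φ rstar x) * obsProb Φ rstar x
        = Real.sqrt (obsProb Φ r x) * Real.sqrt (obsProb Φ rstar x) := by
      rw [div_mul_eq_mul_div, mul_div_assoc, Real.div_sqrt]
    simp only [hw_def, hG_def]
    rw [Real.sqrt_div h2, Real.sqrt_mul h2]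
    linear_combination (d x.1 * d x.2.1) * key
  have hEX : ∀ r, ∑ data : Fin M → T × T × Bool, P data * X r data = g r ^ M := by
    intro r
    have key : ∀ data : Fin M → T × T × Bool, P data * X r data = ∏ m, G r (data m) := by
      intro data
      simp only [hP_def, hX_def, ← Finset.prod_mul_distrib]
      exact Finset.prod_congr rfl fun m _ => hwX r (data m)
    rw [Finset.sum_congr rfl fun data _ => key data]
    have h := Finset.prod_univ_sum (fun _ : Fin M => (univ : Finset (T × T × Bool)))
      (fun _ x => G r x)
    rw [Fintype.piFinset_univ] at h
    rw [← h, hg_def, Finset.prod_const, Finset.card_univ, Fintype.card_fin]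
  have hcard1 : (1:ℝ) ≤ (Rcls.card : ℝ) := by
    exact_mod_cast Finset.card_pos.2 ⟨rstar, hstar⟩
  have hcne : (Rcls.card : ℝ) ≠ 0 := by positivity
  have hgpos : ∀ r : T → ℝ, 0 < g r := by
    intro r
    have hτ : ∃ τ, 0 < d τ := by
      by_contra h
      push_neg at h
      have h0 : ∑ τ, d τ = 0 := Finset.sum_eq_zero fun τ _ => le_antisymm (h τ) (hd0 τ)
      rw [hd1] at h0; norm_num at h0
    obtain ⟨τ, hτ⟩ := hτ
    refine Finset.sum_pos' (fun x _ => hG0 r x) ⟨(τ, τ, true), Finset.mem_univ _, ?_⟩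
    simp only [hG_def]
    have h1 := (hq r (τ, τ, true)).1
    have h2 := (hq rstar (τ, τ, true)).1
    positivity
  set aR : (T → ℝ) → ℝ := fun r => ((Rcls.card : ℝ) / δ) * g r ^ M with haR_def
  have haRpos : ∀ r : T → ℝ, 0 < aR r := by
    intro r
    have h1 : (0:ℝ) < (Rcls.card : ℝ) / δ := div_pos (by linarith) hδ.1
    have h2 := hgpos r
    simp only [haR_def]
    positivity
  have hmarkov : ∀ r : T → ℝ, ∑ data ∈ univ.filter (fun data => aR r ≤ X r data), P data
      ≤ δ / Rcls.card := by
    intro r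
    have hgM : (g r) ^ M ≠ 0 := pow_ne_zero _ (hgpos r).ne'
    calc ∑ data ∈ univ.filter (fun data => aR r ≤ X r data), P data
        ≤ (∑ data : Fin M → T × T × Bool, P data * X r data) / aR r :=
          markov_fin P (X r) hP0 (hX0 r) (haRpos r)
      _ = g r ^ M / (((Rcls.card : ℝ) / δ) * g r ^ M) := by rw [hEX r, haR_def]
      _ = δ / Rcls.card := by
          rw [mul_comm, ← div_div, div_self hgM, one_div, inv_div]
  have hunion : ∑ data ∈ univ.filter
      (fun data => ∃ r ∈ Rcls, aR r ≤ X r data), P data ≤ δ := by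
    calc ∑ data ∈ univ.filter (fun data => ∃ r ∈ Rcls, aR r ≤ X r data), P data
        ≤ ∑ data ∈ univ.filter (fun data => ∃ r ∈ Rcls, aR r ≤ X r data),
            ∑ r ∈ Rcls, if aR r ≤ X r data then P data else 0 := by
          refine Finset.sum_le_sum fun data hdata => ?_
          obtain ⟨r₀, hr₀, hle⟩ := (Finset.mem_filter.1 hdata).2
          have h := Finset.single_le_sum (f := fun r => if aR r ≤ X r data then P data else 0)
            (fun r _ => by by_cases hc : aR r ≤ X r data <;> simp [hc, hP0 data]) hr₀
          simpa [hle] using h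
      _ ≤ ∑ data : Fin M → T × T × Bool,
            ∑ r ∈ Rcls, if aR r ≤ X r data then P data else 0 :=
          Finset.sum_le_sum_of_subset_of_nonneg (filter_subset _ _)
            (fun data _ _ => Finset.sum_nonneg fun r _ => by
              by_cases hc : aR r ≤ X r data <;> simp [hc, hP0 data])
      _ = ∑ r ∈ Rcls, ∑ data ∈ univ.filter (fun data => aR r ≤ X r data), P data := by
          rw [Finset.sum_comm]
          exact Finset.sum_congr rfl fun r _ => (Finset.sum_filter _ _).symm
      _ ≤ ∑ _r ∈ Rcls, δ / Rcls.card := Finset.sum_le_sum fun r _ => hmarkov r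
      _ = δ := by
          rw [Finset.sum_const, nsmul_eq_mul, mul_div_cancel₀ _ hcne]
  have hgood : 1 - δ ≤ ∑ data ∈ univ.filter
      (fun data => ∀ r ∈ Rcls, X r data < aR r), P data := by
    have hsplit := Finset.sum_filter_add_sum_filter_not univ
      (fun data => ∀ r ∈ Rcls, X r data < aR r) P
    have hco : univ.filter (fun data => ¬ ∀ r ∈ Rcls, X r data < aR r)
        = univ.filter (fun data => ∃ r ∈ Rcls, aR r ≤ X r data) := by
      refine Finset.filter_congr fun data _ => ?_
      constructor
      · intro h
        push_neg at h
        obtain ⟨r, hr, hle⟩ := h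
        exact ⟨r, hr, hle⟩
      · intro ⟨r, hr, hle⟩ h
        exact absurd (h r hr) (not_lt.2 hle)
    rw [hco] at hsplit
    linarith [hPsum, hsplit, hunion]
  -- pass to the goal
  simp only [hP_def, hw_def] at hgood
  refine le_trans hgood (Finset.sum_le_sum_of_subset_of_nonneg ?_ fun data _ _ =>
    Finset.prod_nonneg fun m _ => mul_nonneg (mul_nonneg (hd0 _) (hd0 _)) (hq rstar _).1.le)
  intro data hdata
  rw [Finset.mem_filter] at hdata ⊢
  refine ⟨Finset.mem_univ _, ?_⟩
  obtain ⟨hmem, hmle⟩ := hrhat data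
  -- X (rhat data) data ≥ 1
  have hXge1 : (1:ℝ) ≤ X (rhat data) data := by
    have hXpos : 0 < X (rhat data) data := by
      refine Finset.prod_pos fun m _ => Real.sqrt_pos.2 ?_
      exact div_pos (hq _ _).1 (hq _ _).1
    have hlog : 0 ≤ Real.log (X (rhat data) data) := by
      have hterm : ∀ m : Fin M,
          Real.log (Real.sqrt (obsProb Φ (rhat data) (data m) / obsProb Φ rstar (data m)))
          = (Real.log (obsProb Φ (rhat data) (data m))
              - Real.log (obsProb Φ rstar (data m))) / 2 := by
        intro m
        rw [Real.log_sqrt (div_nonneg (hq _ _).1.le (hq _ _).1.le),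
          Real.log_div (hq _ _).1.ne' (hq _ _).1.ne']
      have hmle' := hmle rstar hstar
      simp only [hX_def]
      rw [Real.log_prod (fun m _ => ne_of_gt (Real.sqrt_pos.2
        (div_pos (hq _ _).1 (hq _ _).1)))]
      rw [Finset.sum_congr rfl fun m _ => hterm m, ← Finset.sum_div]
      have h2 : 0 ≤ ∑ m, (Real.log (obsProb Φ (rhat data) (data m))
          - Real.log (obsProb Φ rstar (data m))) := by
        rw [Finset.sum_sub_distrib]
        have ha : ∑ m, -Real.log (obsProb Φ (rhat data) (data m))
            ≤ ∑ m, -Real.log (obsProb Φ rstar (data m)) := hmle'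
        rw [Finset.sum_neg_distrib, Finset.sum_neg_distrib] at ha
        linarith
      linarith
    calc (1:ℝ) = Real.exp 0 := (Real.exp_zero).symm
      _ ≤ Real.exp (Real.log (X (rhat data) data)) := Real.exp_le_exp.2 hlog
      _ = X (rhat data) data := Real.exp_log hXpos
  have hXlt := hdata.2 (rhat data) hmem
  set ghat := g (rhat data) with hghat_def
  have hghat_pos : 0 < ghat := hgpos _
  have hL : 0 < Real.log ((Rcls.card : ℝ) / δ) ∨ True := Or.inr trivial
  have hkey : (M : ℝ) * (1 - ghat) < Real.log ((Rcls.card : ℝ) / δ) := by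
    have hcd : (0:ℝ) < (Rcls.card : ℝ) / δ := div_pos (by linarith) hδ.1
    have h1 : δ / Rcls.card < ghat ^ M := by
      have h0 : (1:ℝ) < ((Rcls.card : ℝ) / δ) * ghat ^ M := by
        have h := lt_of_le_of_lt hXge1 hXlt
        simp only [haR_def] at h
        rw [hghat_def]
        exact h
      have h3 := mul_lt_mul_of_pos_left h0 (div_pos hδ.1 (by linarith : (0:ℝ) < Rcls.card))
      rw [mul_one] at h3
      have h5 : (δ/(Rcls.card:ℝ)) * ((Rcls.card:ℝ)/δ) = 1 := by
        rw [div_mul_div_comm, mul_comm (Rcls.card:ℝ) δ, div_self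
          (ne_of_gt (mul_pos hδ.1 (lt_of_lt_of_le one_pos hcard1)))]
      have h4 : (δ/(Rcls.card:ℝ)) * (((Rcls.card:ℝ)/δ) * ghat^M) = ghat^M := by
        rw [← mul_assoc, h5, one_mul]
      rw [h4] at h3
      exact h3
    have hlog1 : Real.log (δ / Rcls.card) < Real.log (ghat ^ M) :=
      Real.log_lt_log (div_pos hδ.1 (by linarith)) h1
    rw [Real.log_pow] at hlog1
    have hlog2 : Real.log (δ / Rcls.card) = - Real.log ((Rcls.card : ℝ) / δ) := by
      rw [← Real.log_inv, inv_div]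
    rw [hlog2] at hlog1
    have hlog3 : (M:ℝ) * Real.log ghat ≤ (M:ℝ) * (ghat - 1) :=
      mul_le_mul_of_nonneg_left (Real.log_le_sub_one_of_pos hghat_pos) (Nat.cast_nonneg M)
    nlinarith
  -- pointwise Hellinger bound
  set s2 : T → T → ℝ := fun τ0 τ1 =>
    Real.sqrt (Φ (rhat data τ1 - rhat data τ0) * Φ (rstar τ1 - rstar τ0))
      + Real.sqrt ((1 - Φ (rhat data τ1 - rhat data τ0)) * (1 - Φ (rstar τ1 - rstar τ0)))
    with hs2_def
  have hgs : ghat = ∑ τ0, ∑ τ1, d τ0 * d τ1 * s2 τ0 τ1 := by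
    simp only [hghat_def, hg_def]
    rw [Fintype.sum_prod_type]
    refine Finset.sum_congr rfl fun τ0 _ => ?_
    rw [Fintype.sum_prod_type]
    refine Finset.sum_congr rfl fun τ1 _ => ?_
    rw [Fintype.sum_bool]
    simp [hG_def, hs2_def, obsProb]
    ring
  have hpoint : ∀ τ0 τ1 : T,
      |rstar τ0 - rstar τ1 - rhat data τ0 + rhat data τ1| ^ 2
        ≤ 8 * κ^2 * (1 - s2 τ0 τ1) := by
    intro τ0 τ1
    have hu : rstar τ1 - rstar τ0 ∈ Set.Icc (-rmax) rmax := by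
      have h1 := hbnd rstar hstar τ0
      have h2 := hbnd rstar hstar τ1
      exact ⟨by linarith [h1.2, h2.1], by linarith [h1.1, h2.2]⟩
    have hv : rhat data τ1 - rhat data τ0 ∈ Set.Icc (-rmax) rmax := by
      have h1 := hbnd _ hmem τ0
      have h2 := hbnd _ hmem τ1
      exact ⟨by linarith [h1.2, h2.1], by linarith [h1.1, h2.2]⟩
    have hlip := mvt_lip hκ hdiff hderiv hv hu
    have hsq : (rhat data τ1 - rhat data τ0 - (rstar τ1 - rstar τ0))^2
        ≤ κ^2 * (Φ (rhat data τ1 - rhat data τ0) - Φ (rstar τ1 - rstar τ0))^2 := by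
      have h := pow_le_pow_left₀ (abs_nonneg _) hlip 2
      rw [mul_pow, sq_abs, sq_abs] at h
      exact h
    have hbern := bern_hellinger
      ⟨(hΦ01 (rhat data τ1 - rhat data τ0)).1.le, (hΦ01 (rhat data τ1 - rhat data τ0)).2.le⟩
      ⟨(hΦ01 (rstar τ1 - rstar τ0)).1.le, (hΦ01 (rstar τ1 - rstar τ0)).2.le⟩
    have heq : rstar τ0 - rstar τ1 - rhat data τ0 + rhat data τ1
        = rhat data τ1 - rhat data τ0 - (rstar τ1 - rstar τ0) := by ring
    have hmul := mul_le_mul_of_nonneg_left hbern (sq_nonneg κ)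
    rw [heq, sq_abs]
    calc (rhat data τ1 - rhat data τ0 - (rstar τ1 - rstar τ0))^2
        ≤ κ^2 * (Φ (rhat data τ1 - rhat data τ0) - Φ (rstar τ1 - rstar τ0))^2 := hsq
      _ ≤ κ^2 * (8 * (1 - (Real.sqrt (Φ (rhat data τ1 - rhat data τ0) * Φ (rstar τ1 - rstar τ0))
            + Real.sqrt ((1 - Φ (rhat data τ1 - rhat data τ0))
              * (1 - Φ (rstar τ1 - rstar τ0)))))) := hmul
      _ = 8 * κ^2 * (1 - s2 τ0 τ1) := by simp only [hs2_def]; ring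
  have hdd1 : ∑ τ0, ∑ τ1 : T, d τ0 * d τ1 = 1 := by
    have e : ∀ τ0 : T, ∑ τ1, d τ0 * d τ1 = d τ0 := by
      intro τ0; rw [← Finset.mul_sum, hd1, mul_one]
    rw [Finset.sum_congr rfl fun τ0 _ => e τ0, hd1]
  calc ∑ τ0, ∑ τ1, d τ0 * d τ1 *
          |rstar τ0 - rstar τ1 - rhat data τ0 + rhat data τ1| ^ 2
      ≤ ∑ τ0, ∑ τ1, d τ0 * d τ1 * (8 * κ^2 * (1 - s2 τ0 τ1)) := by
        refine Finset.sum_le_sum fun τ0 _ => Finset.sum_le_sum fun τ1 _ => ?_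
        exact mul_le_mul_of_nonneg_left (hpoint τ0 τ1) (mul_nonneg (hd0 _) (hd0 _))
    _ = 8 * κ^2 * (1 - ghat) := by
        conv_rhs => rw [hgs, mul_sub, ← hdd1, Finset.mul_sum, Finset.mul_sum,
          ← Finset.sum_sub_distrib]
        refine Finset.sum_congr rfl fun τ0 _ => ?_
        conv_rhs => rw [Finset.mul_sum, Finset.mul_sum, ← Finset.sum_sub_distrib]
        refine Finset.sum_congr rfl fun τ1 _ => ?_
        ring
    _ ≤ 8 * κ ^ 2 * Real.log ((Rcls.card : ℝ) / δ) / M := by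
        have hM' : (0:ℝ) < M := Nat.cast_pos.2 hM
        have h1 : 1 - ghat ≤ Real.log ((Rcls.card : ℝ) / δ) / M := by
          rw [le_div_iff₀ hM']
          have hcomm : (1 - ghat) * (M:ℝ) = (M:ℝ) * (1 - ghat) := by ring
          linarith [hkey, hcomm]
        calc 8 * κ^2 * (1 - ghat) ≤ 8 * κ^2 * (Real.log ((Rcls.card : ℝ) / δ) / M) :=
              mul_le_mul_of_nonneg_left h1 (by positivity)
          _ = 8 * κ ^ 2 * Real.log ((Rcls.card : ℝ) / δ) / M := by ring
end

section
/- (Closed form of the regularized mirror-descent step.) Let A be a finite set, let q and p_t be strictly positive probability distributions on A, let Q : A → ℝ, and let λ, η > 0. Then the unique minimizer over the probability simplex Δ(A) of the function p ↦ ⟨−Q, p⟩ + λ·KL(p‖q) + (1/η)·KL(p‖p_t) is given by p*(a) = (1/Z)·q(a)^{ηλ/(ηλ+1)}·p_t(a)^{1/(ηλ+1)}·exp(η·Q(a)/(ηλ+1)), where Z = Σ_{a'} q(a')^{ηλ/(ηλ+1)}·p_t(a')^{1/(ηλ+1)}·exp(η·Q(a')/(ηλ+1)). -/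
open Finset

private lemma klterm_le {t s : ℝ} (ht : 0 ≤ t) (hs : 0 < s) :
    t - s ≤ t * Real.log (t / s) := by
  rcases eq_or_lt_of_le ht with h | h
  · simp [← h]; linarith
  · have h1 : Real.log (s / t) ≤ s / t - 1 := Real.log_le_sub_one_of_pos (by positivity)
    have h2 : Real.log (s / t) = - Real.log (t / s) := by
      rw [← Real.log_inv]; congr 1; field_simp
    have h3 := mul_le_mul_of_nonneg_left h1 ht
    have h4 : t * (s / t - 1) = s - t := by field_simp
    rw [h2, mul_neg] at h3
    linarith

private lemma klterm_lt {t s : ℝ} (ht : 0 ≤ t) (hs : 0 < s) (hne : t ≠ s) :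
    t - s < t * Real.log (t / s) := by
  rcases eq_or_lt_of_le ht with h | h
  · simp [← h]; linarith
  · have hne' : s / t ≠ 1 := by
      intro hcontra
      apply hne
      field_simp at hcontra
      linarith
    have h1 : Real.log (s / t) < s / t - 1 := Real.log_lt_sub_one_of_pos (by positivity) hne'
    have h2 : Real.log (s / t) = - Real.log (t / s) := by
      rw [← Real.log_inv]; congr 1; field_simp
    have h3 := (mul_lt_mul_iff_right₀ h).mpr h1
    have h4 : t * (s / t - 1) = s - t := by field_simp
    rw [h2, mul_neg] at h3
    linarith

private lemma kl_nonneg {A : Type*} [Fintype A] {p ps : A → ℝ}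
    (hp : p ∈ probSimplex A) (hps0 : ∀ a, 0 < ps a) (hps1 : ∑ a, ps a = 1) :
    0 ≤ KLdiv p ps := by
  obtain ⟨hp0, hp1⟩ := hp
  have : ∑ a, (p a - ps a) ≤ ∑ a, p a * Real.log (p a / ps a) :=
    Finset.sum_le_sum fun a _ => klterm_le (hp0 a) (hps0 a)
  rw [Finset.sum_sub_distrib, hp1, hps1] at this
  simpa [KLdiv] using this

private lemma kl_pos {A : Type*} [Fintype A] {p ps : A → ℝ}
    (hp : p ∈ probSimplex A) (hps0 : ∀ a, 0 < ps a) (hps1 : ∑ a, ps a = 1)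
    (hne : p ≠ ps) : 0 < KLdiv p ps := by
  obtain ⟨hp0, hp1⟩ := hp
  obtain ⟨a₀, ha₀⟩ : ∃ a, p a ≠ ps a := by
    by_contra hc
    push_neg at hc
    exact hne (funext hc)
  have : ∑ a, (p a - ps a) < ∑ a, p a * Real.log (p a / ps a) :=
    Finset.sum_lt_sum (fun a _ => klterm_le (hp0 a) (hps0 a))
      ⟨a₀, Finset.mem_univ a₀, klterm_lt (hp0 a₀) (hps0 a₀) ha₀⟩
  rw [Finset.sum_sub_distrib, hp1, hps1] at this
  simpa [KLdiv] using this

/-- **Closed form of the regularized mirror-descent step.**  For a finite set `A`, strictly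
positive distributions `q, pₜ` on `A`, `Q : A → ℝ`, and `λ, η > 0`, the unique minimizer over
the simplex of `p ↦ ⟨−Q, p⟩ + λ·KL(p‖q) + (1/η)·KL(p‖pₜ)` is
`p*(a) = (1/Z)·q(a)^{ηλ/(ηλ+1)}·pₜ(a)^{1/(ηλ+1)}·exp(η·Q(a)/(ηλ+1))` with `Z` the
normalizing constant. -/
theorem md_step_closed_form {A : Type*} [Fintype A] [Nonempty A]
    (q pt : A → ℝ) (hq : q ∈ probSimplex A) (hpt : pt ∈ probSimplex A)
    (hqpos : ∀ a, 0 < q a) (hptpos : ∀ a, 0 < pt a)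
    (Q : A → ℝ) (lam eta : ℝ) (hlam : 0 < lam) (heta : 0 < eta) :
    let Z : ℝ := ∑ a', q a' ^ (eta * lam / (eta * lam + 1)) *
      pt a' ^ (1 / (eta * lam + 1)) * Real.exp (eta * Q a' / (eta * lam + 1));
    let pstar : A → ℝ := fun a => (1 / Z) * (q a ^ (eta * lam / (eta * lam + 1)) *
      pt a ^ (1 / (eta * lam + 1)) * Real.exp (eta * Q a / (eta * lam + 1)));
    pstar ∈ probSimplex A ∧
      (∀ p ∈ probSimplex A, mdObj Q q pt lam eta pstar ≤ mdObj Q q pt lam eta p) ∧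
      (∀ p ∈ probSimplex A, p ≠ pstar → mdObj Q q pt lam eta pstar < mdObj Q q pt lam eta p) := by
  intro Z pstar
  have hel : eta * lam + 1 ≠ 0 := by positivity
  have hterm : ∀ a, 0 < q a ^ (eta * lam / (eta * lam + 1)) *
      pt a ^ (1 / (eta * lam + 1)) * Real.exp (eta * Q a / (eta * lam + 1)) := fun a =>
    mul_pos (mul_pos (Real.rpow_pos_of_pos (hqpos a) _)
      (Real.rpow_pos_of_pos (hptpos a) _)) (Real.exp_pos _)
  have hZpos : (0 : ℝ) < Z :=
    Finset.sum_pos (fun a _ => hterm a) Finset.univ_nonempty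
  have hps0 : ∀ a, 0 < pstar a := fun a =>
    mul_pos (by positivity) (hterm a)
  have hps1 : ∑ a, pstar a = 1 := by
    show ∑ a, (1 / Z) * _ = 1
    rw [← Finset.mul_sum]
    show (1 / Z) * Z = 1
    field_simp
  have hpsmem : pstar ∈ probSimplex A := ⟨fun a => (hps0 a).le, hps1⟩
  set κ : ℝ := lam + 1 / eta with hκ
  have hκpos : 0 < κ := by positivity
  -- key identity
  have hkey : ∀ p ∈ probSimplex A,
      mdObj Q q pt lam eta p = κ * KLdiv p pstar - κ * Real.log Z := by
    intro p hp
    obtain ⟨hp0, hp1⟩ := hp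
    have step1 : mdObj Q q pt lam eta p
        = ∑ a, (-Q a * p a + lam * (p a * Real.log (p a / q a))
            + (1 / eta) * (p a * Real.log (p a / pt a))) := by
      simp [mdObj, KLdiv, Finset.mul_sum, Finset.sum_add_distrib]
    have step2 : ∀ a, (-Q a * p a + lam * (p a * Real.log (p a / q a))
            + (1 / eta) * (p a * Real.log (p a / pt a)))
        = κ * (p a * Real.log (p a / pstar a)) - κ * Real.log Z * p a := by
      intro a
      rcases eq_or_lt_of_le (hp0 a) with h0 | h0
      · simp [← h0]
      · have hlogps : Real.log (pstar a) = -Real.log Z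
            + (eta * lam / (eta * lam + 1)) * Real.log (q a)
            + (1 / (eta * lam + 1)) * Real.log (pt a)
            + eta * Q a / (eta * lam + 1) := by
          show Real.log ((1 / Z) * _) = _
          rw [Real.log_mul (by positivity) (hterm a).ne',
            Real.log_mul (mul_pos (Real.rpow_pos_of_pos (hqpos a) _)
              (Real.rpow_pos_of_pos (hptpos a) _)).ne' (Real.exp_pos _).ne',
            Real.log_mul (Real.rpow_pos_of_pos (hqpos a) _).ne'
              (Real.rpow_pos_of_pos (hptpos a) _).ne',
            Real.log_rpow (hqpos a), Real.log_rpow (hptpos a), Real.log_exp,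
            one_div, Real.log_inv]
          ring
        rw [Real.log_div h0.ne' (hps0 a).ne', Real.log_div h0.ne' (hqpos a).ne',
          Real.log_div h0.ne' (hptpos a).ne', hlogps, hκ]
        field_simp
        ring
    rw [step1, Finset.sum_congr rfl (fun a _ => step2 a), Finset.sum_sub_distrib,
      ← Finset.mul_sum, ← Finset.mul_sum]
    rw [hp1, mul_one]
    simp [KLdiv]
  have hkl_self : KLdiv pstar pstar = 0 := by
    unfold KLdiv
    apply Finset.sum_eq_zero
    intro a _
    rw [div_self (hps0 a).ne', Real.log_one, mul_zero]
  refine ⟨hpsmem, ?_, ?_⟩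
  · intro p hp
    rw [hkey p hp, hkey pstar hpsmem, hkl_self]
    have := kl_nonneg hp hps0 hps1
    nlinarith
  · intro p hp hne
    rw [hkey p hp, hkey pstar hpsmem, hkl_self]
    have := kl_pos hp hps0 hps1 hne
    nlinarith
end

section
/- (Per-step mirror descent inequality.) Let A be a finite set, q a strictly positive probability distribution on A, λ, η > 0, Q : A → [0, r_max], and p_t ∈ Δ(A) strictly positive. Let p_{t+1} = argmin_{p∈Δ(A)} ⟨−Q, p⟩ + λ·KL(p‖q) + (1/η)·KL(p‖p_t). Then for every p* ∈ Δ(A): η·⟨Q, p* − p_t⟩ + ηλ·KL(p_t‖q) − ηλ·KL(p*‖q) ≤ (KL(p*‖p_t) − KL(p*‖p_{t+1})) + ηλ·(KL(p_t‖q) − KL(p_{t+1}‖q)) + η²·r_max²/2. -/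
open Finset

section AuxLemmas

open Real

private lemma log_ge_one_sub_inv {t : ℝ} (ht : 0 < t) : 1 - 1/t ≤ Real.log t := by
  have h := Real.log_le_sub_one_of_pos (inv_pos.2 ht)
  rw [Real.log_inv] at h
  rw [one_div]
  linarith

private lemma G_deriv (t : ℝ) (ht : 0 < t) :
    HasDerivAt (fun s => (s+1)*Real.log s - 2*(s-1)) (Real.log t + 1/t - 1) t := by
  have h1 : HasDerivAt (fun s : ℝ => s + 1) 1 t := (hasDerivAt_id t).add_const 1
  have h2 := Real.hasDerivAt_log (ne_of_gt ht)
  have h3 := h1.mul h2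
  have h4 : HasDerivAt (fun s : ℝ => 2*(s-1)) 2 t := by
    simpa using ((hasDerivAt_id t).sub_const 1).const_mul 2
  have h5 : HasDerivAt (fun s => (s+1)*Real.log s - 2*(s-1)) _ t := h3.sub h4
  convert h5 using 1
  field_simp
  ring

private lemma G_mono : MonotoneOn (fun s => (s+1)*Real.log s - 2*(s-1)) (Set.Ioi (0:ℝ)) := by
  have hint : interior (Set.Ioi (0:ℝ)) = Set.Ioi 0 := interior_Ioi
  apply monotoneOn_of_deriv_nonneg (convex_Ioi 0)
  · exact fun x hx => ((G_deriv x hx).continuousAt).continuousWithinAt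
  · rw [hint]
    exact fun x hx => ((G_deriv x hx).differentiableAt).differentiableWithinAt
  · rw [hint]
    intro x hx
    rw [(G_deriv x hx).deriv]
    have := log_ge_one_sub_inv hx
    linarith

private lemma G_nonneg {t : ℝ} (ht : 1 ≤ t) : 0 ≤ (t+1)*Real.log t - 2*(t-1) := by
  have h := G_mono (Set.mem_Ioi.2 one_pos) (Set.mem_Ioi.2 (lt_of_lt_of_le one_pos ht)) ht
  simpa using h

private lemma G_nonpos {t : ℝ} (ht0 : 0 < t) (ht : t ≤ 1) : (t+1)*Real.log t - 2*(t-1) ≤ 0 := by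
  have h := G_mono (Set.mem_Ioi.2 ht0) (Set.mem_Ioi.2 one_pos) ht
  simpa using h

private lemma F_deriv (t : ℝ) (ht : 0 < t) :
    HasDerivAt (fun s => 2*(s+2)*(s*Real.log s - s + 1) - 3*(s-1)^2)
      (4*((t+1)*Real.log t - 2*(t-1))) t := by
  have hlog := Real.hasDerivAt_log (ne_of_gt ht)
  have h1 : HasDerivAt (fun s : ℝ => s * Real.log s) (Real.log t + 1) t := by
    have : HasDerivAt (fun s : ℝ => s * Real.log s) (1 * Real.log t + t * t⁻¹) t := (hasDerivAt_id t).mul hlog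
    convert this using 1
    field_simp
  have h2 : HasDerivAt (fun s : ℝ => s*Real.log s - s + 1) (Real.log t) t := by
    simpa using (h1.sub (hasDerivAt_id t)).add_const 1
  have h3 : HasDerivAt (fun s : ℝ => 2*(s+2)) 2 t := by
    simpa using ((hasDerivAt_id t).add_const 2).const_mul 2
  have h4 := h3.mul h2
  have h5 : HasDerivAt (fun s : ℝ => 3*(s-1)^2) (3*(2*(t-1))) t := by
    have : HasDerivAt (fun s : ℝ => 3*(s - 1)^2) _ t :=
      (((hasDerivAt_id t).sub_const 1).pow 2).const_mul 3
    convert this using 1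
    simp
  have h6 : HasDerivAt (fun s => 2*(s+2)*(s*Real.log s - s + 1) - 3*(s-1)^2) _ t :=
    h4.sub h5
  convert h6 using 1
  ring

private lemma F_nonneg {t : ℝ} (ht : 0 < t) :
    0 ≤ 2*(t+2)*(t*Real.log t - t + 1) - 3*(t-1)^2 := by
  set F : ℝ → ℝ := fun s => 2*(s+2)*(s*Real.log s - s + 1) - 3*(s-1)^2 with hF
  have hF1 : F 1 = 0 := by simp [hF]
  rcases le_or_gt 1 t with h | h
  · have hmono : MonotoneOn F (Set.Ici (1:ℝ)) := by
      apply monotoneOn_of_deriv_nonneg (convex_Ici 1)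
      · exact fun x hx => ((F_deriv x (lt_of_lt_of_le one_pos hx)).continuousAt).continuousWithinAt
      · rw [interior_Ici]
        exact fun x hx => ((F_deriv x (lt_trans one_pos hx)).differentiableAt).differentiableWithinAt
      · rw [interior_Ici]
        intro x hx
        rw [(F_deriv x (lt_trans one_pos hx)).deriv]
        have := G_nonneg (le_of_lt hx)
        linarith
    have := hmono (Set.mem_Ici.2 le_rfl) (Set.mem_Ici.2 h) h
    rw [hF1] at this
    exact this
  · have hanti : AntitoneOn F (Set.Ioc (0:ℝ) 1) := by
      apply antitoneOn_of_deriv_nonpos (convex_Ioc 0 1)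
      · exact fun x hx => ((F_deriv x hx.1).continuousAt).continuousWithinAt
      · rw [interior_Ioc]
        exact fun x hx => ((F_deriv x hx.1).differentiableAt).differentiableWithinAt
      · rw [interior_Ioc]
        intro x hx
        rw [(F_deriv x hx.1).deriv]
        have := G_nonpos hx.1 (le_of_lt hx.2)
        linarith
    have := hanti (Set.mem_Ioc.2 ⟨ht, h.le⟩) (Set.mem_Ioc.2 ⟨one_pos, le_rfl⟩) h.le
    rw [hF1] at this
    exact this

private lemma star2 {x y : ℝ} (hx : 0 < x) (hy : 0 < y) :
    3*(x-y)^2 ≤ 2*(x+2*y)*(x*Real.log (x/y) - x + y) := by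
  have h := F_nonneg (div_pos hx hy)
  have h1 : (0:ℝ) ≤ y * y := by positivity
  have h2 := mul_le_mul_of_nonneg_left (by linarith :
    3*(x/y-1)^2 ≤ 2*(x/y+2)*((x/y)*Real.log (x/y) - (x/y) + 1)) h1
  have e1 : y*y*(3*(x/y-1)^2) = 3*(x-y)^2 := by
    field_simp
  have e2 : y*y*(2*(x/y+2)*((x/y)*Real.log (x/y) - (x/y) + 1))
      = 2*(x+2*y)*(x*Real.log (x/y) - x + y) := by
    field_simp
  linarith [h2, e1.symm.le, e2.le]

private lemma term_nonneg' {x y : ℝ} (hx : 0 ≤ x) (hy : 0 < y) :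
    0 ≤ x * Real.log (x / y) - x + y := by
  rcases eq_or_lt_of_le hx with h | h
  · rw [← h]; simpa using hy.le
  · have h1 := Real.log_le_sub_one_of_pos (div_pos hy h)
    rw [Real.log_div hy.ne' h.ne'] at h1
    rw [Real.log_div h.ne' hy.ne']
    have hxy : x * (y / x) = y := by field_simp
    nlinarith [mul_le_mul_of_nonneg_left h1 h.le]

private lemma term_pos' {x y : ℝ} (hx : 0 < x) (hy : 0 < y) (hne : x ≠ y) :
    0 < x * Real.log (x / y) - x + y := by
  have hne1 : y / x ≠ 1 := by
    intro h
    apply hne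
    field_simp at h
    linarith
  have h1 := Real.log_lt_sub_one_of_pos (div_pos hy hx) hne1
  rw [Real.log_div hy.ne' hx.ne'] at h1
  rw [Real.log_div hx.ne' hy.ne']
  have hxy : x * (y / x) = y := by field_simp
  nlinarith [mul_lt_mul_of_pos_left h1 hx]

private lemma step_term {x y b R : ℝ} (hx : 0 ≤ x) (hy : 0 < y) (hb0 : 0 ≤ b) (hbR : b ≤ R) :
    b * (x - y) ≤ (x * Real.log (x / y) - x + y) + R^2 * (x + 2*y)/6 := by
  rcases eq_or_lt_of_le hx with h | h
  · rw [← h]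
    simp only [zero_sub, zero_mul, zero_add, zero_div]
    nlinarith [mul_nonneg hb0 hy.le, sq_nonneg R]
  · have hstar := star2 h hy
    have hxy : (0:ℝ) < x + 2*y := by linarith
    have hD := term_nonneg' hx hy
    have hbsq : b^2 ≤ R^2 := by nlinarith
    have key : b*(x-y) ≤ (x * Real.log (x / y) - x + y) + b^2*(x+2*y)/6 := by
      nlinarith [sq_nonneg (3*(x-y) - b*(x+2*y)), hstar, hxy]
    have : b^2*(x+2*y) ≤ R^2*(x+2*y) := mul_le_mul_of_nonneg_right hbsq hxy.le
    linarith

private lemma kldiv_eq_sub' {A : Type*} [Fintype A] (p r : A → ℝ) (hp : ∀ a, 0 ≤ p a)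
    (hr : ∀ a, 0 < r a) :
    KLdiv p r = ∑ a, (p a * Real.log (p a) - p a * Real.log (r a)) := by
  unfold KLdiv
  refine Finset.sum_congr rfl fun a _ => ?_
  rcases eq_or_lt_of_le (hp a) with h | h
  · simp [← h]
  · rw [Real.log_div h.ne' (hr a).ne']; ring

private lemma klself {A : Type*} [Fintype A] (p : A → ℝ) (hp : ∀ a, 0 < p a) :
    KLdiv p p = 0 := by
  unfold KLdiv
  refine Finset.sum_eq_zero fun a _ => ?_
  rw [div_self (hp a).ne', Real.log_one, mul_zero]

private lemma kldiv_as_sum {A : Type*} [Fintype A] (p r : A → ℝ)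
    (hps : ∑ a, p a = 1) (hrs : ∑ a, r a = 1) :
    KLdiv p r = ∑ a, (p a * Real.log (p a / r a) - p a + r a) := by
  unfold KLdiv
  rw [Finset.sum_add_distrib, Finset.sum_sub_distrib, hps, hrs]
  ring

private lemma gibbs_nonneg {A : Type*} [Fintype A] (p r : A → ℝ) (hp : ∀ a, 0 ≤ p a)
    (hr : ∀ a, 0 < r a) (hps : ∑ a, p a = 1) (hrs : ∑ a, r a = 1) :
    0 ≤ KLdiv p r := by
  rw [kldiv_as_sum p r hps hrs]
  exact Finset.sum_nonneg fun a _ => term_nonneg' (hp a) (hr a)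

private lemma gibbs_eq {A : Type*} [Fintype A] (p r : A → ℝ) (hp : ∀ a, 0 ≤ p a)
    (hr : ∀ a, 0 < r a) (hps : ∑ a, p a = 1) (hrs : ∑ a, r a = 1)
    (h0 : KLdiv p r ≤ 0) : ∀ a, p a = r a := by
  rw [kldiv_as_sum p r hps hrs] at h0
  have hnn : ∀ a ∈ Finset.univ, 0 ≤ p a * Real.log (p a / r a) - p a + r a :=
    fun a _ => term_nonneg' (hp a) (hr a)
  have hz : ∀ a ∈ Finset.univ, p a * Real.log (p a / r a) - p a + r a = 0 := by
    rw [← Finset.sum_eq_zero_iff_of_nonneg hnn]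
    linarith [Finset.sum_nonneg hnn]
  intro a
  have ha := hz a (Finset.mem_univ a)
  by_contra hne
  rcases eq_or_lt_of_le (hp a) with h | h
  · rw [← h] at ha
    simp at ha
    exact (hr a).ne' (by linarith)
  · exact (term_pos' h (hr a) hne).ne' ha

noncomputable def softmaxD {A : Type*} [Fintype A] (c : A → ℝ) (mu : ℝ) : A → ℝ :=
  fun a => Real.exp (-c a / mu) / ∑ b, Real.exp (-c b / mu)

private lemma softmaxD_pos {A : Type*} [Fintype A] [Nonempty A] (c : A → ℝ) (mu : ℝ) (a : A) :
    0 < softmaxD c mu a :=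
  div_pos (Real.exp_pos _) (Finset.sum_pos (fun _ _ => Real.exp_pos _) Finset.univ_nonempty)

private lemma softmaxD_sum {A : Type*} [Fintype A] [Nonempty A] (c : A → ℝ) (mu : ℝ) :
    ∑ a, softmaxD c mu a = 1 := by
  unfold softmaxD
  rw [← Finset.sum_div]
  exact div_self (Finset.sum_pos (fun _ _ => Real.exp_pos _) Finset.univ_nonempty).ne'

private lemma log_softmaxD {A : Type*} [Fintype A] [Nonempty A] (c : A → ℝ) (mu : ℝ) (a : A) :
    Real.log (softmaxD c mu a) = -c a / mu - Real.log (∑ b, Real.exp (-c b / mu)) := by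
  unfold softmaxD
  rw [Real.log_div (Real.exp_ne_zero _)
    (Finset.sum_pos (fun _ _ => Real.exp_pos _) Finset.univ_nonempty).ne', Real.log_exp]

private lemma linear_entropy_eq {A : Type*} [Fintype A] [Nonempty A]
    (c : A → ℝ) (mu : ℝ) (hmu : 0 < mu) (p : A → ℝ) (hp : ∀ a, 0 ≤ p a)
    (hp1 : ∑ a, p a = 1) :
    (∑ a, c a * p a) + mu * (∑ a, p a * Real.log (p a))
      = mu * KLdiv p (softmaxD c mu)
        - mu * Real.log (∑ b, Real.exp (-c b / mu)) := by
  have hKL : KLdiv p (softmaxD c mu)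
      = (∑ a, p a * Real.log (p a))
        - ∑ a, p a * (-c a / mu - Real.log (∑ b, Real.exp (-c b / mu))) := by
    rw [kldiv_eq_sub' p _ hp (softmaxD_pos c mu), Finset.sum_sub_distrib]
    congr 1
    exact Finset.sum_congr rfl fun a _ => by rw [log_softmaxD]
  have h2 : mu * (∑ a, p a * (-c a / mu - Real.log (∑ b, Real.exp (-c b / mu))))
      = -(∑ a, c a * p a) - mu * Real.log (∑ b, Real.exp (-c b / mu)) := by
    rw [Finset.mul_sum]
    have he : ∀ a ∈ Finset.univ,
        mu * (p a * (-c a / mu - Real.log (∑ b, Real.exp (-c b / mu))))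
        = -(c a * p a) + (-(mu * Real.log (∑ b, Real.exp (-c b / mu)))) * p a :=
      fun a _ => by field_simp; ring
    rw [Finset.sum_congr rfl he, Finset.sum_add_distrib, ← Finset.mul_sum, hp1]
    simp [Finset.sum_neg_distrib]
    ring
  rw [hKL]
  rw [mul_sub]
  linarith [h2]

private lemma mdObj_expand {A : Type*} [Fintype A] (Q q pt : A → ℝ) (lam eta : ℝ)
    (p : A → ℝ) (hp : ∀ a, 0 ≤ p a) (hq : ∀ a, 0 < q a) (hpt : ∀ a, 0 < pt a) :
    mdObj Q q pt lam eta p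
      = (∑ a, (-Q a - lam * Real.log (q a) - (1/eta) * Real.log (pt a)) * p a)
        + (lam + 1/eta) * (∑ a, p a * Real.log (p a)) := by
  unfold mdObj
  rw [kldiv_eq_sub' p q hp hq, kldiv_eq_sub' p pt hp hpt]
  rw [Finset.mul_sum, Finset.mul_sum, Finset.mul_sum]
  rw [← Finset.sum_add_distrib, ← Finset.sum_add_distrib, ← Finset.sum_add_distrib]
  exact Finset.sum_congr rfl fun a _ => by ring

end AuxLemmas

/-- **Per-step mirror descent inequality.**  Let `q` be a strictly positive distribution on a
finite set `A`, `λ, η > 0`, `Q : A → [0, r_max]`, `pₜ` strictly positive in the simplex, and let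
`p_{t+1}` minimize `p ↦ ⟨−Q, p⟩ + λ·KL(p‖q) + (1/η)·KL(p‖pₜ)` over the simplex.  Then for
every `p* ∈ Δ(A)`:
`η·⟨Q, p* − pₜ⟩ + ηλ·KL(pₜ‖q) − ηλ·KL(p*‖q) ≤ (KL(p*‖pₜ) − KL(p*‖p_{t+1})) +
ηλ·(KL(pₜ‖q) − KL(p_{t+1}‖q)) + η²·r_max²/2`. -/
theorem md_step_inequality {A : Type*} [Fintype A]
    (q : A → ℝ) (hq : q ∈ probSimplex A) (hqpos : ∀ a, 0 < q a)
    (lam eta rmax : ℝ) (hlam : 0 < lam) (heta : 0 < eta)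
    (Q : A → ℝ) (hQ : ∀ a, Q a ∈ Set.Icc (0 : ℝ) rmax)
    (pt : A → ℝ) (hpt : pt ∈ probSimplex A) (hptpos : ∀ a, 0 < pt a)
    (pnext : A → ℝ)
    (hnext : pnext ∈ probSimplex A ∧
      ∀ p ∈ probSimplex A, mdObj Q q pt lam eta pnext ≤ mdObj Q q pt lam eta p) :
    ∀ pstar ∈ probSimplex A,
      eta * (∑ a, Q a * (pstar a - pt a)) + eta * lam * KLdiv pt q
          - eta * lam * KLdiv pstar q
        ≤ (KLdiv pstar pt - KLdiv pstar pnext)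
            + eta * lam * (KLdiv pt q - KLdiv pnext q)
            + eta ^ 2 * rmax ^ 2 / 2 := by
  intro pstar hpstar
  obtain ⟨⟨hnpos0, hnsum⟩, hmin⟩ := hnext
  have hA : Nonempty A := by
    by_contra h
    rw [not_nonempty_iff] at h
    have h2 := hq.2
    rw [Finset.univ_eq_empty, Finset.sum_empty] at h2
    norm_num at h2
  have hmu : (0:ℝ) < lam + 1/eta := by positivity
  set c : A → ℝ := fun a => -Q a - lam * Real.log (q a) - (1/eta) * Real.log (pt a) with hc
  have hkey : ∀ p : A → ℝ, (∀ a, 0 ≤ p a) → (∑ a, p a = 1) →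
      mdObj Q q pt lam eta p
        = (lam + 1/eta) * KLdiv p (softmaxD c (lam + 1/eta))
          - (lam + 1/eta) * Real.log (∑ b, Real.exp (-c b / (lam + 1/eta))) := by
    intro p hp h1
    have h2 := mdObj_expand Q q pt lam eta p hp hqpos hptpos
    have h3 := linear_entropy_eq c (lam + 1/eta) hmu p hp h1
    rw [h2, ← h3]
  set P : A → ℝ := softmaxD c (lam + 1/eta) with hP
  have hPpos : ∀ a, 0 < P a := softmaxD_pos c _
  have hPsum : ∑ a, P a = 1 := softmaxD_sum c _
  have hPsimplex : P ∈ probSimplex A := ⟨fun a => (hPpos a).le, hPsum⟩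
  have h1 := hkey pnext hnpos0 hnsum
  have h2 := hkey P (fun a => (hPpos a).le) hPsum
  rw [klself P hPpos] at h2
  have hmin' := hmin P hPsimplex
  have hKLle : KLdiv pnext P ≤ 0 := by
    rw [h1, h2] at hmin'
    have hle : (lam + 1/eta) * KLdiv pnext P ≤ (lam + 1/eta) * 0 := by linarith
    exact le_of_mul_le_mul_left hle hmu
  have hpe : ∀ a, pnext a = P a := gibbs_eq pnext P hnpos0 hPpos hnsum hPsum hKLle
  have hfun : pnext = P := funext hpe
  have hnpos : ∀ a, 0 < pnext a := fun a => by rw [hpe a]; exact hPpos a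
  have h3 := hkey pstar hpstar.1 hpstar.2
  rw [← hfun] at h1 h3
  rw [klself pnext hnpos] at h1
  have hE : mdObj Q q pt lam eta pstar
      = mdObj Q q pt lam eta pnext + (lam + 1/eta) * KLdiv pstar pnext := by
    rw [h1, h3]; ring
  unfold mdObj at hE
  have e1 : (∑ a, -Q a * pstar a) = -(∑ a, Q a * pstar a) := by
    simp [neg_mul]
  have e2 : (∑ a, -Q a * pnext a) = -(∑ a, Q a * pnext a) := by
    simp [neg_mul]
  rw [e1, e2] at hE
  have hetane : eta ≠ 0 := heta.ne'
  have hE2 : eta * lam * KLdiv pstar q + KLdiv pstar pt - eta * (∑ a, Q a * pstar a)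
      = eta * lam * KLdiv pnext q + KLdiv pnext pt - eta * (∑ a, Q a * pnext a)
        + eta * lam * KLdiv pstar pnext + KLdiv pstar pnext := by
    field_simp at hE
    linear_combination hE
  -- the descent / Pinsker-type bound
  have hterm : ∀ a ∈ Finset.univ, eta * Q a * (pnext a - pt a)
      ≤ (pnext a * Real.log (pnext a / pt a) - pnext a + pt a)
        + (eta*rmax)^2 * (pnext a + 2 * pt a)/6 :=
    fun a _ => step_term (hnpos0 a) (hptpos a) (mul_nonneg heta.le (hQ a).1)
      (mul_le_mul_of_nonneg_left (hQ a).2 heta.le)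
  have hsum := Finset.sum_le_sum hterm
  have hL : ∑ a, eta * Q a * (pnext a - pt a) = eta * ∑ a, Q a * (pnext a - pt a) := by
    rw [Finset.mul_sum]
    exact Finset.sum_congr rfl fun a _ => by ring
  have hR : ∑ a, ((pnext a * Real.log (pnext a / pt a) - pnext a + pt a)
        + (eta*rmax)^2 * (pnext a + 2*pt a)/6)
      = KLdiv pnext pt + eta^2 * rmax^2 / 2 := by
    rw [Finset.sum_add_distrib]
    have hA1 : ∑ a, (pnext a * Real.log (pnext a / pt a) - pnext a + pt a)
        = KLdiv pnext pt := by
      rw [Finset.sum_add_distrib, Finset.sum_sub_distrib, hnsum, hpt.2]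
      unfold KLdiv; ring
    have hA2 : ∑ a, (eta*rmax)^2 * (pnext a + 2*pt a)/6 = eta^2*rmax^2/2 := by
      have he : ∀ a ∈ Finset.univ, (eta*rmax)^2 * (pnext a + 2*pt a)/6
          = ((eta*rmax)^2/6) * pnext a + ((eta*rmax)^2/3) * pt a := fun a _ => by ring
      rw [Finset.sum_congr rfl he, Finset.sum_add_distrib, ← Finset.mul_sum, ← Finset.mul_sum,
        hnsum, hpt.2]
      ring
    rw [hA1, hA2]
  rw [hL, hR] at hsum
  have hKnn : 0 ≤ KLdiv pstar pnext :=
    gibbs_nonneg pstar pnext hpstar.1 hnpos hpstar.2 hnsum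
  have hprod : 0 ≤ eta * lam * KLdiv pstar pnext :=
    mul_nonneg (mul_nonneg heta.le hlam.le) hKnn
  have hsplit : eta * (∑ a, Q a * (pstar a - pt a))
      = eta * (∑ a, Q a * pstar a) - eta * (∑ a, Q a * pt a) := by
    have : ∑ a, Q a * (pstar a - pt a) = ∑ a, Q a * pstar a - ∑ a, Q a * pt a := by
      rw [← Finset.sum_sub_distrib]
      exact Finset.sum_congr rfl fun a _ => by ring
    rw [this]; ring
  have hsplit6 : eta * (∑ a, Q a * (pnext a - pt a))
      = eta * (∑ a, Q a * pnext a) - eta * (∑ a, Q a * pt a) := by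
    have : ∑ a, Q a * (pnext a - pt a) = ∑ a, Q a * pnext a - ∑ a, Q a * pt a := by
      rw [← Finset.sum_sub_distrib]
      exact Finset.sum_congr rfl fun a _ => by ring
    rw [this]; ring
  have hexp : eta * lam * (KLdiv pt q - KLdiv pnext q)
      = eta * lam * KLdiv pt q - eta * lam * KLdiv pnext q := by ring
  linarith [hE2, hsum, hKnn, hprod, hsplit, hsplit6, hexp]
end
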